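/- For every natural number n ≥ 3, F(n) ≥ n(n−1)(n−2)/15; that is, there exists a 3-edge-coloring of K_n with at least (2/5)·C(n,3) rainbow triangles. -/

import Mathlib

/-- A triangle (3-element vertex set) is rainbow: its three edges get pairwise distinct colors. -/
def IsRainbow {V : Type*} [DecidableEq V] (G : Sym2 V → Fin 3) (T : Finset V) : Prop :=
  ∃ u v w : V, T = {u, v, w} ∧ u ≠ v ∧ u ≠ w ∧ v ≠ w ∧
    G s(u, v) ≠ G s(u, w) ∧ G s(u, v) ≠ G s(v, w) ∧ G s(u, w) ≠ G s(v, w)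

/-- The number of rainbow triangles of a 3-edge-coloring. -/
noncomputable def rbCount {V : Type*} [DecidableEq V] (G : Sym2 V → Fin 3) : ℕ :=
  Nat.card {T : Finset V // IsRainbow G T}

/-- `maxRb n` is `F(n)`: the maximum number of rainbow triangles over all
3-edge-colorings of the complete graph on `n` vertices. -/
noncomputable def maxRb (n : ℕ) : ℕ :=
  Finset.univ.sup fun G : Sym2 (Fin n) → Fin 3 => rbCount G



/-- base coloring of K4: edge {i,j} gets color (i xor j) - 1. -/
def bcol (i j : ℕ) : Fin 3 := ⟨(((i % 4) ^^^ (j % 4)) - 1) % 3, Nat.mod_lt _ (by norm_num)⟩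

lemma bcol_symm (i j : ℕ) : bcol i j = bcol j i := by
  apply Fin.ext
  show (((i % 4) ^^^ (j % 4)) - 1) % 3 = (((j % 4) ^^^ (i % 4)) - 1) % 3
  rw [Nat.xor_comm]

lemma bcol_mod (i j : ℕ) : bcol i j = bcol (i % 4) (j % 4) := by
  have h1 : i % 4 % 4 = i % 4 := by omega
  have h2 : j % 4 % 4 = j % 4 := by omega
  simp only [bcol, h1, h2]

lemma bcol_trip4 : ∀ p q r : Fin 4, p ≠ q → p ≠ r → q ≠ r →
    (bcol p.1 q.1 ≠ bcol p.1 r.1 ∧ bcol p.1 q.1 ≠ bcol q.1 r.1 ∧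
      bcol p.1 r.1 ≠ bcol q.1 r.1) := by decide

lemma bcol_trip {a b c : ℕ} (hab : a % 4 ≠ b % 4) (hac : a % 4 ≠ c % 4) (hbc : b % 4 ≠ c % 4) :
    bcol a b ≠ bcol a c ∧ bcol a b ≠ bcol b c ∧ bcol a c ≠ bcol b c := by
  have h := bcol_trip4 ⟨a % 4, Nat.mod_lt _ (by norm_num)⟩ ⟨b % 4, Nat.mod_lt _ (by norm_num)⟩
    ⟨c % 4, Nat.mod_lt _ (by norm_num)⟩ (by simpa using hab) (by simpa using hac)
    (by simpa using hbc)
  simpa only [← bcol_mod] using h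

/-- the iterated-blow-up coloring on ℕ. -/
def cInf (u v : ℕ) : Fin 3 :=
  if _h1 : u = v then 0
  else if _h2 : u % 4 = v % 4 then cInf (u / 4) (v / 4)
  else bcol u v
termination_by u + v
decreasing_by omega

lemma cInf_cross {u v : ℕ} (h : u % 4 ≠ v % 4) : cInf u v = bcol u v := by
  rw [cInf]
  have : u ≠ v := by omega
  simp [this, h]

lemma cInf_shift {x y : ℕ} (i : ℕ) (hi : i < 4) (hxy : x ≠ y) :
    cInf (4 * x + i) (4 * y + i) = cInf x y := by
  rw [cInf]
  have h1 : 4 * x + i ≠ 4 * y + i := by omega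
  have h2 : (4 * x + i) % 4 = (4 * y + i) % 4 := by omega
  have h3 : (4 * x + i) / 4 = x := by omega
  have h4 : (4 * y + i) / 4 = y := by omega
  simp [h1, h2, h3, h4, hxy]

lemma cInf_symm (u v : ℕ) : cInf u v = cInf v u := by
  have key : ∀ s u v : ℕ, u + v = s → cInf u v = cInf v u := by
    intro s
    induction s using Nat.strong_induction_on with
    | _ s ih =>
      intro u v hs
      by_cases h1 : u = v
      · subst h1; rfl
      by_cases h2 : u % 4 = v % 4
      · conv_lhs => rw [cInf]
        conv_rhs => rw [cInf]
        rw [dif_neg h1, dif_neg (Ne.symm h1), dif_pos h2, dif_pos h2.symm]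
        exact ih (u / 4 + v / 4) (by omega) _ _ rfl
      · rw [cInf_cross h2, cInf_cross (Ne.symm h2)]
        exact bcol_symm u v
  exact key (u + v) u v rfl

/-- the coloring restricted to `Fin n`. -/
def Gc (n : ℕ) : Sym2 (Fin n) → Fin 3 :=
  Sym2.lift ⟨fun u v => cInf u.val v.val, fun u v => cInf_symm u.val v.val⟩

lemma Gc_eval {n : ℕ} (u v : Fin n) : Gc n s(u, v) = cInf u.val v.val := by
  simp [Gc]

/-- size of the i-th part. -/
def pcnt (n i : ℕ) : ℕ := n / 4 + if i < n % 4 then 1 else 0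

/-- the i-th part. -/
abbrev Pt (n i : ℕ) : Type := {v : Fin n // v.val % 4 = i}

def pEquiv (n i : ℕ) (hi : i < 4) : Pt n i ≃ Fin (pcnt n i) where
  toFun v := ⟨v.1.1 / 4, by
    have h1 := v.1.2; have h2 := v.2
    simp only [pcnt]; split_ifs <;> omega⟩
  invFun x := ⟨⟨4 * x.1 + i, by
    have hx := x.2; simp only [pcnt] at hx; split_ifs at hx <;> omega⟩, by
    show (4 * x.1 + i) % 4 = i; omega⟩
  left_inv v := by
    apply Subtype.ext; apply Fin.ext
    have h2 := v.2
    show 4 * (v.1.1 / 4) + i = v.1.1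
    omega
  right_inv x := by
    apply Fin.ext
    show (4 * x.1 + i) / 4 = x.1
    omega

lemma card_Pt (n i : ℕ) (hi : i < 4) : Nat.card (Pt n i) = pcnt n i := by
  rw [Nat.card_congr (pEquiv n i hi), Nat.card_eq_fintype_card, Fintype.card_fin]

/-- embedding of part i. -/
def ePart (n i : ℕ) (hi : i < 4) (x : Fin (pcnt n i)) : Fin n :=
  ⟨4 * x.1 + i, by have hx := x.2; simp only [pcnt] at hx; split_ifs at hx <;> omega⟩

lemma ePart_inj {n i : ℕ} (hi : i < 4) : Function.Injective (ePart n i hi) := by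
  intro x y h
  apply Fin.ext
  have : (4 * x.1 + i : ℕ) = 4 * y.1 + i := congrArg Fin.val h
  omega

lemma ePart_res {n i : ℕ} (hi : i < 4) (x : Fin (pcnt n i)) :
    (ePart n i hi x).val % 4 = i := by
  show (4 * x.1 + i) % 4 = i
  omega

lemma ePart_color {n i : ℕ} (hi : i < 4) {u v : Fin (pcnt n i)} (huv : u ≠ v) :
    Gc n s(ePart n i hi u, ePart n i hi v) = Gc (pcnt n i) s(u, v) := by
  rw [Gc_eval, Gc_eval]
  exact cInf_shift i hi (fun h => huv (Fin.ext h))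

lemma rainbow_cross {n : ℕ} (x y z : Fin n)
    (hxy : x.1 % 4 ≠ y.1 % 4) (hxz : x.1 % 4 ≠ z.1 % 4) (hyz : y.1 % 4 ≠ z.1 % 4) :
    IsRainbow (Gc n) {x, y, z} := by
  obtain ⟨h1, h2, h3⟩ := bcol_trip hxy hxz hyz
  refine ⟨x, y, z, rfl, fun h => hxy (by rw [h]), fun h => hxz (by rw [h]),
    fun h => hyz (by rw [h]), ?_, ?_, ?_⟩ <;>
    simp only [Gc_eval, cInf_cross hxy, cInf_cross hxz, cInf_cross hyz] <;> assumption

lemma rainbow_part {n i : ℕ} (hi : i < 4) {T : Finset (Fin (pcnt n i))}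
    (hT : IsRainbow (Gc (pcnt n i)) T) : IsRainbow (Gc n) (T.image (ePart n i hi)) := by
  obtain ⟨u, v, w, rfl, huv, huw, hvw, c1, c2, c3⟩ := hT
  refine ⟨ePart n i hi u, ePart n i hi v, ePart n i hi w, ?_,
    fun h => huv (ePart_inj hi h), fun h => huw (ePart_inj hi h),
    fun h => hvw (ePart_inj hi h), ?_, ?_, ?_⟩
  · simp [Finset.image_insert]
  · rw [ePart_color hi huv, ePart_color hi huw]; exact c1
  · rw [ePart_color hi huv, ePart_color hi hvw]; exact c2
  · rw [ePart_color hi huw, ePart_color hi hvw]; exact c3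

lemma img_cross {n : ℕ} {i j k : ℕ} (x : Pt n i) (y : Pt n j) (z : Pt n k) :
    ({x.1, y.1, z.1} : Finset (Fin n)).image (fun v => v.1 % 4) = ({i, j, k} : Finset ℕ) := by
  simp [Finset.image_insert, x.2, y.2, z.2]

lemma rainbow_nonempty {V : Type*} [DecidableEq V] {G : Sym2 V → Fin 3} {T : Finset V}
    (hT : IsRainbow G T) : T.Nonempty := by
  obtain ⟨u, v, w, rfl, -⟩ := hT
  exact ⟨u, by simp⟩

lemma img_part {n i : ℕ} (hi : i < 4) {T : Finset (Fin (pcnt n i))} (hT : T.Nonempty) :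
    (T.image (ePart n i hi)).image (fun v => v.1 % 4) = ({i} : Finset ℕ) := by
  rw [Finset.image_image]
  rw [show ((fun v : Fin n => v.1 % 4) ∘ ePart n i hi) = fun _ => i by
    funext x; exact ePart_res hi x]
  exact Finset.image_const hT i

lemma cross_inj {n : ℕ} {i j k : ℕ} (hij : i ≠ j) (hik : i ≠ k) (hjk : j ≠ k)
    (x x' : Pt n i) (y y' : Pt n j) (z z' : Pt n k)
    (h : ({x.1, y.1, z.1} : Finset (Fin n)) = {x'.1, y'.1, z'.1}) :
    x = x' ∧ y = y' ∧ z = z' := by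
  have hx : x'.1 ∈ ({x.1, y.1, z.1} : Finset (Fin n)) := by rw [h]; simp
  have hy : y'.1 ∈ ({x.1, y.1, z.1} : Finset (Fin n)) := by rw [h]; simp
  have hz : z'.1 ∈ ({x.1, y.1, z.1} : Finset (Fin n)) := by rw [h]; simp
  simp only [Finset.mem_insert, Finset.mem_singleton] at hx hy hz
  refine ⟨?_, ?_, ?_⟩
  · apply Subtype.ext
    rcases hx with h' | h' | h'
    · exact h'.symm
    · exact absurd (x'.2 ▸ y.2 ▸ congrArg (fun t : Fin n => t.1 % 4) h') hij
    · exact absurd (x'.2 ▸ z.2 ▸ congrArg (fun t : Fin n => t.1 % 4) h') hik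
  · apply Subtype.ext
    rcases hy with h' | h' | h'
    · exact absurd (y'.2 ▸ x.2 ▸ congrArg (fun t : Fin n => t.1 % 4) h') hij.symm
    · exact h'.symm
    · exact absurd (y'.2 ▸ z.2 ▸ congrArg (fun t : Fin n => t.1 % 4) h') hjk
  · apply Subtype.ext
    rcases hz with h' | h' | h'
    · exact absurd (z'.2 ▸ x.2 ▸ congrArg (fun t : Fin n => t.1 % 4) h') hik.symm
    · exact absurd (z'.2 ▸ y.2 ▸ congrArg (fun t : Fin n => t.1 % 4) h') hjk.symm
    · exact h'.symm

abbrev RBt (m : ℕ) : Type := {T : Finset (Fin m) // IsRainbow (Gc m) T}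

lemma rb_eq (m : ℕ) : rbCount (Gc m) = Nat.card (RBt m) := rfl

def Src (n : ℕ) : Type :=
  (Pt n 0 × Pt n 1 × Pt n 2) ⊕ (Pt n 0 × Pt n 1 × Pt n 3) ⊕ (Pt n 0 × Pt n 2 × Pt n 3) ⊕
  (Pt n 1 × Pt n 2 × Pt n 3) ⊕ RBt (pcnt n 0) ⊕ RBt (pcnt n 1) ⊕ RBt (pcnt n 2) ⊕ RBt (pcnt n 3)

instance (n : ℕ) : Finite (Src n) := by unfold Src; infer_instance

def Phi (n : ℕ) : Src n → Finset (Fin n)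
  | .inl p => {p.1.1, p.2.1.1, p.2.2.1}
  | .inr (.inl p) => {p.1.1, p.2.1.1, p.2.2.1}
  | .inr (.inr (.inl p)) => {p.1.1, p.2.1.1, p.2.2.1}
  | .inr (.inr (.inr (.inl p))) => {p.1.1, p.2.1.1, p.2.2.1}
  | .inr (.inr (.inr (.inr (.inl T)))) => T.1.image (ePart n 0 (by norm_num))
  | .inr (.inr (.inr (.inr (.inr (.inl T))))) => T.1.image (ePart n 1 (by norm_num))
  | .inr (.inr (.inr (.inr (.inr (.inr (.inl T)))))) => T.1.image (ePart n 2 (by norm_num))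
  | .inr (.inr (.inr (.inr (.inr (.inr (.inr T)))))) => T.1.image (ePart n 3 (by norm_num))

def rset (n : ℕ) : Src n → Finset ℕ
  | .inl _ => {0, 1, 2}
  | .inr (.inl _) => {0, 1, 3}
  | .inr (.inr (.inl _)) => {0, 2, 3}
  | .inr (.inr (.inr (.inl _))) => {1, 2, 3}
  | .inr (.inr (.inr (.inr (.inl _)))) => {0}
  | .inr (.inr (.inr (.inr (.inr (.inl _))))) => {1}
  | .inr (.inr (.inr (.inr (.inr (.inr (.inl _)))))) => {2}
  | .inr (.inr (.inr (.inr (.inr (.inr (.inr _)))))) => {3}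

lemma Phi_res (n : ℕ) (s : Src n) :
    (Phi n s).image (fun v => v.1 % 4) = rset n s := by
  rcases s with ⟨x,y,z⟩|⟨x,y,z⟩|⟨x,y,z⟩|⟨x,y,z⟩|T|T|T|T <;>
    simp only [Phi, rset] <;>
    first
      | exact img_cross x y z
      | exact img_part (by norm_num) (rainbow_nonempty T.2)

lemma Phi_rainbow (n : ℕ) (s : Src n) : IsRainbow (Gc n) (Phi n s) := by
  rcases s with ⟨x,y,z⟩|⟨x,y,z⟩|⟨x,y,z⟩|⟨x,y,z⟩|T|T|T|T <;>
    simp only [Phi] <;>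
    first
      | exact rainbow_cross x.1 y.1 z.1 (by rw [x.2, y.2]; norm_num)
          (by rw [x.2, z.2]; norm_num) (by rw [y.2, z.2]; norm_num)
      | exact rainbow_part (by norm_num) T.2

lemma Phi_inj (n : ℕ) : Function.Injective (Phi n) := by
  intro s s' h
  have hr : rset n s = rset n s' := by rw [← Phi_res, ← Phi_res, h]
  rcases s with ⟨x,y,z⟩|⟨x,y,z⟩|⟨x,y,z⟩|⟨x,y,z⟩|T|T|T|T <;>
    rcases s' with ⟨x',y',z'⟩|⟨x',y',z'⟩|⟨x',y',z'⟩|⟨x',y',z'⟩|T'|T'|T'|T' <;>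
    simp only [rset] at hr <;>
    first
      | exact absurd hr (by decide)
      | (simp only [Phi] at h
         obtain ⟨e1, e2, e3⟩ := cross_inj (by norm_num) (by norm_num) (by norm_num)
           x x' y y' z z' h
         subst e1; subst e2; subst e3; rfl)
      | (simp only [Phi] at h
         have hTT := Finset.image_injective (ePart_inj (by norm_num)) h
         obtain rfl : T = T' := Subtype.ext hTT
         rfl)

lemma count_le (n : ℕ) :
    pcnt n 0 * pcnt n 1 * pcnt n 2 + pcnt n 0 * pcnt n 1 * pcnt n 3 +
    pcnt n 0 * pcnt n 2 * pcnt n 3 + pcnt n 1 * pcnt n 2 * pcnt n 3 +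
    rbCount (Gc (pcnt n 0)) + rbCount (Gc (pcnt n 1)) + rbCount (Gc (pcnt n 2)) +
    rbCount (Gc (pcnt n 3)) ≤ rbCount (Gc n) := by
  have hinj : Function.Injective (fun s => (⟨Phi n s, Phi_rainbow n s⟩ : RBt n)) :=
    fun a b h => Phi_inj n (congrArg Subtype.val h)
  have hle := Nat.card_le_card_of_injective _ hinj
  have hcard : Nat.card (Src n) =
      pcnt n 0 * pcnt n 1 * pcnt n 2 + pcnt n 0 * pcnt n 1 * pcnt n 3 +
      pcnt n 0 * pcnt n 2 * pcnt n 3 + pcnt n 1 * pcnt n 2 * pcnt n 3 +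
      rbCount (Gc (pcnt n 0)) + rbCount (Gc (pcnt n 1)) + rbCount (Gc (pcnt n 2)) +
      rbCount (Gc (pcnt n 3)) := by
    unfold Src
    simp only [Nat.card_sum, Nat.card_prod, card_Pt n 0 (by norm_num),
      card_Pt n 1 (by norm_num), card_Pt n 2 (by norm_num), card_Pt n 3 (by norm_num),
      rb_eq]
    ring
  rw [← hcard]
  exact hle.trans_eq (rb_eq n).symm

lemma poly0 (Q : ℝ) (hQ0 : 0 ≤ Q) : (4 * Q + 0) * (4 * Q + 0 - 1) * (4 * Q + 0 - 2) / 15 ≤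
    Q * Q * Q + Q * Q * Q + Q * Q * Q + Q * Q * Q +
    (Q * (Q - 1) * (Q - 2) / 15 + Q * (Q - 1) * (Q - 2) / 15 +
     Q * (Q - 1) * (Q - 2) / 15 + Q * (Q - 1) * (Q - 2) / 15) := by
  nlinarith [hQ0, sq_nonneg Q]

lemma poly1 (Q : ℝ) (hQ0 : 0 ≤ Q) : (4 * Q + 1) * (4 * Q + 1 - 1) * (4 * Q + 1 - 2) / 15 ≤
    (Q + 1) * Q * Q + (Q + 1) * Q * Q + (Q + 1) * Q * Q + Q * Q * Q +
    ((Q + 1) * (Q + 1 - 1) * (Q + 1 - 2) / 15 + Q * (Q - 1) * (Q - 2) / 15 +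
     Q * (Q - 1) * (Q - 2) / 15 + Q * (Q - 1) * (Q - 2) / 15) := by
  nlinarith [hQ0, sq_nonneg Q]

lemma poly2 (Q : ℝ) (hQ0 : 0 ≤ Q) : (4 * Q + 2) * (4 * Q + 2 - 1) * (4 * Q + 2 - 2) / 15 ≤
    (Q + 1) * (Q + 1) * Q + (Q + 1) * (Q + 1) * Q + (Q + 1) * Q * Q + (Q + 1) * Q * Q +
    ((Q + 1) * (Q + 1 - 1) * (Q + 1 - 2) / 15 + (Q + 1) * (Q + 1 - 1) * (Q + 1 - 2) / 15 +
     Q * (Q - 1) * (Q - 2) / 15 + Q * (Q - 1) * (Q - 2) / 15) := by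
  nlinarith [hQ0, sq_nonneg Q]

lemma poly3 (Q : ℝ) (hQ0 : 0 ≤ Q) : (4 * Q + 3) * (4 * Q + 3 - 1) * (4 * Q + 3 - 2) / 15 ≤
    (Q + 1) * (Q + 1) * (Q + 1) + (Q + 1) * (Q + 1) * Q + (Q + 1) * (Q + 1) * Q +
    (Q + 1) * (Q + 1) * Q +
    ((Q + 1) * (Q + 1 - 1) * (Q + 1 - 2) / 15 + (Q + 1) * (Q + 1 - 1) * (Q + 1 - 2) / 15 +
     (Q + 1) * (Q + 1 - 1) * (Q + 1 - 2) / 15 + Q * (Q - 1) * (Q - 2) / 15) := by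
  nlinarith [hQ0, sq_nonneg Q]

lemma main_bound (n : ℕ) :
    (n : ℝ) * ((n : ℝ) - 1) * ((n : ℝ) - 2) / 15 ≤ (rbCount (Gc n) : ℝ) := by
  induction n using Nat.strong_induction_on with
  | _ n ih =>
  by_cases hn : n ≤ 2
  · have : (n : ℝ) * ((n : ℝ) - 1) * ((n : ℝ) - 2) / 15 ≤ 0 := by
      interval_cases n <;> norm_num
    exact this.trans (by positivity)
  · push_neg at hn
    have hlt : ∀ i, pcnt n i < n := by
      intro i; simp only [pcnt]; split_ifs <;> omega
    have i0 := ih (pcnt n 0) (hlt 0)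
    have i1 := ih (pcnt n 1) (hlt 1)
    have i2 := ih (pcnt n 2) (hlt 2)
    have i3 := ih (pcnt n 3) (hlt 3)
    have hc := count_le n
    have hcast : ((pcnt n 0 * pcnt n 1 * pcnt n 2 + pcnt n 0 * pcnt n 1 * pcnt n 3 +
        pcnt n 0 * pcnt n 2 * pcnt n 3 + pcnt n 1 * pcnt n 2 * pcnt n 3 +
        rbCount (Gc (pcnt n 0)) + rbCount (Gc (pcnt n 1)) + rbCount (Gc (pcnt n 2)) +
        rbCount (Gc (pcnt n 3)) : ℕ) : ℝ) ≤ (rbCount (Gc n) : ℝ) := by exact_mod_cast hc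
    have hr : n % 4 = 0 ∨ n % 4 = 1 ∨ n % 4 = 2 ∨ n % 4 = 3 := by omega
    have hdm : 4 * (n / 4) + n % 4 = n := by omega
    have hQ0 : (0 : ℝ) ≤ ((n / 4 : ℕ) : ℝ) := Nat.cast_nonneg _
    have e0 : pcnt n 0 = n / 4 + if 0 < n % 4 then 1 else 0 := rfl
    have e1 : pcnt n 1 = n / 4 + if 1 < n % 4 then 1 else 0 := rfl
    have e2 : pcnt n 2 = n / 4 + if 2 < n % 4 then 1 else 0 := rfl
    have e3 : pcnt n 3 = n / 4 + if 3 < n % 4 then 1 else 0 := rfl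
    have hn' : (n : ℝ) = 4 * ((n / 4 : ℕ) : ℝ) + ((n % 4 : ℕ) : ℝ) := by
      exact_mod_cast hdm.symm
    set Q : ℝ := ((n / 4 : ℕ) : ℝ) with hQdef
    rcases hr with hr | hr | hr | hr <;>
      rw [hr] at e0 e1 e2 e3 hn' <;>
      norm_num at e0 e1 e2 e3 hn' <;>
      simp only [e0, e1, e2, e3] at hcast i0 i1 i2 i3 <;>
      push_cast at hcast i0 i1 i2 i3 <;>
      rw [hn']
    · have key : (4 * Q + 0) * (4 * Q + 0 - 1) * (4 * Q + 0 - 2) / 15 ≤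
          Q * Q * Q + Q * Q * Q + Q * Q * Q + Q * Q * Q +
          (Q * (Q - 1) * (Q - 2) / 15 + Q * (Q - 1) * (Q - 2) / 15 +
           Q * (Q - 1) * (Q - 2) / 15 + Q * (Q - 1) * (Q - 2) / 15) := by
        exact poly0 Q hQ0
      linarith [key, i0, i1, i2, i3, hcast]
    · have key : (4 * Q + 1) * (4 * Q + 1 - 1) * (4 * Q + 1 - 2) / 15 ≤
          (Q + 1) * Q * Q + (Q + 1) * Q * Q + (Q + 1) * Q * Q + Q * Q * Q +
          ((Q + 1) * (Q + 1 - 1) * (Q + 1 - 2) / 15 + Q * (Q - 1) * (Q - 2) / 15 +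
           Q * (Q - 1) * (Q - 2) / 15 + Q * (Q - 1) * (Q - 2) / 15) := by
        exact poly1 Q hQ0
      linarith [key, i0, i1, i2, i3, hcast]
    · have key : (4 * Q + 2) * (4 * Q + 2 - 1) * (4 * Q + 2 - 2) / 15 ≤
          (Q + 1) * (Q + 1) * Q + (Q + 1) * (Q + 1) * Q + (Q + 1) * Q * Q + (Q + 1) * Q * Q +
          ((Q + 1) * (Q + 1 - 1) * (Q + 1 - 2) / 15 + (Q + 1) * (Q + 1 - 1) * (Q + 1 - 2) / 15 +
           Q * (Q - 1) * (Q - 2) / 15 + Q * (Q - 1) * (Q - 2) / 15) := by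
        exact poly2 Q hQ0
      linarith [key, i0, i1, i2, i3, hcast]
    · have key : (4 * Q + 3) * (4 * Q + 3 - 1) * (4 * Q + 3 - 2) / 15 ≤
          (Q + 1) * (Q + 1) * (Q + 1) + (Q + 1) * (Q + 1) * Q + (Q + 1) * (Q + 1) * Q +
          (Q + 1) * (Q + 1) * Q +
          ((Q + 1) * (Q + 1 - 1) * (Q + 1 - 2) / 15 + (Q + 1) * (Q + 1 - 1) * (Q + 1 - 2) / 15 +
           (Q + 1) * (Q + 1 - 1) * (Q + 1 - 2) / 15 + Q * (Q - 1) * (Q - 2) / 15) := by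
        exact poly3 Q hQ0
      linarith [key, i0, i1, i2, i3, hcast]

theorem stmt7 (n : ℕ) (hn : 3 ≤ n) :
    (maxRb n : ℝ) ≥ (n : ℝ) * ((n : ℝ) - 1) * ((n : ℝ) - 2) / 15 := by
  have h1 := main_bound n
  have h2 : rbCount (Gc n) ≤ maxRb n := Finset.le_sup (Finset.mem_univ (Gc n))
  exact h1.trans (by exact_mod_cast h2)
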